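/- arXiv:2601.03523 — 4 statements merged into one kernel-verified Lean document; each statement's English description precedes it below -/
import Mathlib

section
/- Under the same weight setting (E[P_x] = E[N_x] = 1, Var(P_x) = Var(N_x) = 3, Cov(P_x, N_x) = −1, pairs independent across variables), for any two distinct assignments a ≠ b on the variable set V, Cov(W_a, W_b) = −1, where W_a := Π_{x: a(x)=true} P_x · Π_{x: a(x)=false} N_x and similarly for W_b. -/
open MeasureTheory ProbabilityTheory

lemma my_integral_finset_prod {Ω ι : Type*} [MeasurableSpace Ω] (μ : Measure Ω)
    [IsProbabilityMeasure μ] (g : ι → Ω → ℝ)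
    (hmeas : ∀ i, Measurable (g i))
    (hindep : iIndepFun g μ) (s : Finset ι) :
    (∫ ω, ∏ i ∈ s, g i ω ∂μ) = ∏ i ∈ s, ∫ ω, g i ω ∂μ := by
  classical
  induction s using Finset.induction_on with
  | empty => simp
  | @insert i s hi ih =>
    have hind : IndepFun (∏ j ∈ s, g j) (g i) μ :=
      hindep.indepFun_finsetProd_of_notMem hmeas hi
    have hm : Measurable (∏ j ∈ s, g j) := by
      rw [show (∏ j ∈ s, g j) = fun ω => ∏ j ∈ s, g j ω from funext fun ω => Finset.prod_apply ..]
      exact Finset.measurable_prod _ fun j _ => hmeas j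
    have key := hind.symm.integral_mul_eq_mul_integral (hmeas i).aestronglyMeasurable hm.aestronglyMeasurable
    simp only [Finset.prod_apply, Pi.mul_apply] at key
    have h1 : (∫ ω, ∏ j ∈ insert i s, g j ω ∂μ) = ∫ ω, g i ω * ∏ j ∈ s, g j ω ∂μ := by
      congr 1; funext ω; rw [Finset.prod_insert hi]
    have h2 : integral μ (∏ j ∈ s, g j) = ∫ ω, ∏ j ∈ s, g j ω ∂μ := by
      congr 1; funext ω; exact Finset.prod_apply ..
    rw [Finset.prod_insert hi, h1, key, ih]

/-- Covariance: `Cov(U,V) = E[UV] - E[U]E[V]`; `Var(U) = Cov(U,U)`. -/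
noncomputable def cov {Ω : Type*} [MeasurableSpace Ω] (μ : Measure Ω) (U V : Ω → ℝ) : ℝ :=
  (∫ ω, U ω * V ω ∂μ) - (∫ ω, U ω ∂μ) * (∫ ω, V ω ∂μ)

theorem cov_weights_of_distinct_assignments {Ω V : Type*} [MeasurableSpace Ω] [Fintype V] [DecidableEq V]
    (μ : Measure Ω) [IsProbabilityMeasure μ] (P N : V → Ω → ℝ)
    (hPmeas : ∀ x, Measurable (P x)) (hNmeas : ∀ x, Measurable (N x))
    (hPbdd : ∀ x, ∃ C, ∀ ω, |P x ω| ≤ C) (hNbdd : ∀ x, ∃ C, ∀ ω, |N x ω| ≤ C)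
    (hPexp : ∀ x, (∫ ω, P x ω ∂μ) = 1) (hNexp : ∀ x, (∫ ω, N x ω ∂μ) = 1)
    (hPvar : ∀ x, cov μ (P x) (P x) = 3) (hNvar : ∀ x, cov μ (N x) (N x) = 3)
    (hPNcov : ∀ x, cov μ (P x) (N x) = -1)
    (hindep : iIndepFun (fun x ω => (P x ω, N x ω)) μ)
    (a b : V → Bool) (hab : a ≠ b) :
    cov μ (fun ω => ∏ x, (if a x then P x ω else N x ω))
          (fun ω => ∏ x, (if b x then P x ω else N x ω)) = -1 := by
  classical
  obtain ⟨x0, hx0⟩ : ∃ x, a x ≠ b x := by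
    by_contra h; push_neg at h; exact hab (funext h)
  have hexp : ∀ c : V → Bool,
      (∫ ω, ∏ x, (if c x then P x ω else N x ω) ∂μ) = 1 := by
    intro c
    have hind : iIndepFun
        (fun x ω => if c x then P x ω else N x ω) μ := by
      have := hindep.comp (fun x (p : ℝ × ℝ) => if c x then p.1 else p.2)
        (fun x => by cases hc : c x <;> simp [hc] <;> measurability)
      exact this
    rw [my_integral_finset_prod μ _ (fun x => by
        cases hc : c x <;> simp [hc, hPmeas x, hNmeas x]) hind]
    refine Finset.prod_eq_one fun x _ => ?_
    cases hc : c x <;> simp [hc, hPexp x, hNexp x]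
  have hmix : (∫ ω, (∏ x, (if a x then P x ω else N x ω)) *
      (∏ x, (if b x then P x ω else N x ω)) ∂μ) = 0 := by
    have heq : ∀ ω : Ω, (∏ x, (if a x then P x ω else N x ω)) *
        (∏ x, (if b x then P x ω else N x ω))
        = ∏ x, ((if a x then P x ω else N x ω) * (if b x then P x ω else N x ω)) :=
      fun ω => (Finset.prod_mul_distrib).symm
    simp_rw [heq]
    have hind : iIndepFun
        (fun x ω => (if a x then P x ω else N x ω) * (if b x then P x ω else N x ω)) μ := by
      have := hindep.comp
        (fun x (p : ℝ × ℝ) => (if a x then p.1 else p.2) * (if b x then p.1 else p.2))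
        (fun x => by cases ha : a x <;> cases hb : b x <;> simp [ha, hb] <;> measurability)
      exact this
    rw [my_integral_finset_prod μ _ (fun x => by
        cases ha : a x <;> cases hb : b x <;>
          simp [ha, hb, Measurable.mul, hPmeas x, hNmeas x] <;>
          apply Measurable.mul <;> simp [hPmeas x, hNmeas x]) hind]
    refine Finset.prod_eq_zero (Finset.mem_univ x0) ?_
    have hcov := hPNcov x0
    unfold cov at hcov
    rw [hPexp x0, hNexp x0] at hcov
    have hPN : (∫ ω, P x0 ω * N x0 ω ∂μ) = 0 := by linarith
    have hNP : (∫ ω, N x0 ω * P x0 ω ∂μ) = 0 := by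
      simpa [mul_comm] using hPN
    cases ha : a x0 <;> cases hb : b x0 <;> simp [ha, hb] at hx0 ⊢ <;>
      first
        | exact hPN
        | exact hNP
  unfold cov
  rw [hmix, hexp a, hexp b]
  norm_num
end

section
/- Let f, g be Boolean functions on a finite variable set V of size n, with weight random variables satisfying E[P_x] = E[N_x] = 1, Var(P_x) = Var(N_x) = 3, Cov(P_x,N_x) = −1, and pairs independent across distinct variables. Then Cov(W_f, W_g) = (4^n − 1)·|A_{f∧g}| − |{(a,b) ∈ A_f × A_g : a ≠ b}|, where W_f := Σ_{a ∈ A_f} W_a and A_h denotes the model set of h. -/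
open MeasureTheory ProbabilityTheory

lemma integrable_of_bdd {Ω : Type*} [MeasurableSpace Ω] {μ : Measure Ω} [IsProbabilityMeasure μ]
    {f : Ω → ℝ} (hm : Measurable f) (hb : ∃ C, ∀ ω, |f ω| ≤ C) : Integrable f μ := by
  obtain ⟨C, hC⟩ := hb
  exact ⟨hm.aestronglyMeasurable,
    HasFiniteIntegral.of_bounded (C := C) (ae_of_all μ fun ω => hC ω)⟩

lemma bdd_prod {Ω ι : Type*} (Y : ι → Ω → ℝ) (hbdd : ∀ i, ∃ C, ∀ ω, |Y i ω| ≤ C)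
    (s : Finset ι) : ∃ C, ∀ ω, |∏ i ∈ s, Y i ω| ≤ C := by
  classical
  induction s using Finset.induction_on with
  | empty => exact ⟨1, fun ω => by simp⟩
  | insert _ _ hi ih =>
    obtain ⟨C1, hC1⟩ := hbdd _
    obtain ⟨C, hC⟩ := ih
    refine ⟨|C1| * |C|, fun ω => ?_⟩
    rw [Finset.prod_insert hi, abs_mul]
    exact mul_le_mul ((hC1 ω).trans (le_abs_self _)) ((hC ω).trans (le_abs_self _))
      (abs_nonneg _) (abs_nonneg _)

lemma integral_prod_of_iIndep {Ω ι : Type*} [MeasurableSpace Ω] {μ : Measure Ω}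
    [IsProbabilityMeasure μ] (Y : ι → Ω → ℝ) (hmeas : ∀ i, Measurable (Y i))
    (hbdd : ∀ i, ∃ C, ∀ ω, |Y i ω| ≤ C)
    (hindep : iIndepFun Y μ) (s : Finset ι) :
    (∫ ω, ∏ i ∈ s, Y i ω ∂μ) = ∏ i ∈ s, ∫ ω, Y i ω ∂μ := by
  classical
  induction s using Finset.induction_on with
  | empty => simp
  | @insert i s hi ih =>
    have hIndep : IndepFun (Y i) (∏ j ∈ s, Y j) μ :=
      (hindep.indepFun_finsetProd_of_notMem hmeas hi).symm
    have hfun : (∏ j ∈ s, Y j) = fun ω => ∏ j ∈ s, Y j ω := by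
      funext ω; simp [Finset.prod_apply]
    have hint1 : Integrable (Y i) μ := integrable_of_bdd (hmeas i) (hbdd i)
    have hint2 : Integrable (∏ j ∈ s, Y j) μ := by
      rw [hfun]
      refine integrable_of_bdd (Finset.measurable_prod s (fun j _ => hmeas j)) ?_
      exact bdd_prod Y hbdd s
    have hmul := hIndep.integral_mul_eq_mul_integral hint1.1 hint2.1
    rw [hfun] at hmul
    have heq : (∫ ω, ∏ j ∈ insert i s, Y j ω ∂μ)
        = ∫ ω, Y i ω * ∏ j ∈ s, Y j ω ∂μ := by
      congr 1; funext ω; simp [Finset.prod_insert hi]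
    rw [heq]
    have : (fun ω => Y i ω * ∏ j ∈ s, Y j ω) = (Y i * fun ω => ∏ j ∈ s, Y j ω) := rfl
    rw [this, hmul, Finset.prod_insert hi, ← ih]

theorem cov_wmc_eq {Ω V : Type*} [MeasurableSpace Ω] [Fintype V] [DecidableEq V]
    (μ : Measure Ω) [IsProbabilityMeasure μ] (P N : V → Ω → ℝ)
    (hPmeas : ∀ x, Measurable (P x)) (hNmeas : ∀ x, Measurable (N x))
    (hPbdd : ∀ x, ∃ C, ∀ ω, |P x ω| ≤ C) (hNbdd : ∀ x, ∃ C, ∀ ω, |N x ω| ≤ C)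
    (hPexp : ∀ x, (∫ ω, P x ω ∂μ) = 1) (hNexp : ∀ x, (∫ ω, N x ω ∂μ) = 1)
    (hPvar : ∀ x, cov μ (P x) (P x) = 3) (hNvar : ∀ x, cov μ (N x) (N x) = 3)
    (hPNcov : ∀ x, cov μ (P x) (N x) = -1)
    (hindep : iIndepFun (fun x ω => (P x ω, N x ω)) μ)
    (Af Ag : Finset (V → Bool)) :
    cov μ (fun ω => ∑ a ∈ Af, ∏ x, (if a x then P x ω else N x ω))
          (fun ω => ∑ b ∈ Ag, ∏ x, (if b x then P x ω else N x ω)) =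
      (4 ^ (Fintype.card V) - 1) * ((Af ∩ Ag).card : ℝ) -
        (((Af ×ˢ Ag).filter (fun p => p.1 ≠ p.2)).card : ℝ) := by
  classical
  set n := Fintype.card V
  -- basic facts about the factors
  set W : (V → Bool) → Ω → ℝ := fun a ω => ∏ x, (if a x then P x ω else N x ω) with hW
  have hfmeas : ∀ (a : V → Bool) x, Measurable (fun ω => if a x then P x ω else N x ω) := by
    intro a x; by_cases h : a x <;> simp [h, hPmeas x, hNmeas x]
  have hfbdd : ∀ (a : V → Bool) x, ∃ C, ∀ ω, |(if a x then P x ω else N x ω)| ≤ C := by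
    intro a x; by_cases h : a x <;> simp [h, hPbdd x, hNbdd x]
  have hWmeas : ∀ a, Measurable (W a) := fun a =>
    Finset.measurable_prod _ (fun x _ => hfmeas a x)
  have hWbdd : ∀ a, ∃ C, ∀ ω, |W a ω| ≤ C := fun a =>
    bdd_prod (fun x ω => if a x then P x ω else N x ω) (hfbdd a) Finset.univ
  have hWint : ∀ a, Integrable (W a) μ := fun a => integrable_of_bdd (hWmeas a) (hWbdd a)
  -- expectation of W a
  have hWexp : ∀ a, (∫ ω, W a ω ∂μ) = 1 := by
    intro a
    have hind : iIndepFun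
        (fun x ω => if a x then P x ω else N x ω) μ := by
      have := hindep.comp (mγ := fun _ => inferInstance) (fun x (p : ℝ × ℝ) => if a x then p.1 else p.2)
        (fun x => by by_cases h : a x <;> simp [h, measurable_fst, measurable_snd])
      convert this using 2
      rfl
    rw [integral_prod_of_iIndep _ (hfmeas a) (hfbdd a) hind]
    have : ∀ x, (∫ ω, (if a x then P x ω else N x ω) ∂μ) = 1 := by
      intro x; by_cases h : a x <;> simp [h, hPexp x, hNexp x]
    simp [this]
  -- expectation of W a * W b
  have hsq : ∀ x, (∫ ω, P x ω * P x ω ∂μ) = 4 := by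
    intro x; have := hPvar x; unfold cov at this; rw [hPexp x] at this; linarith
  have hsqN : ∀ x, (∫ ω, N x ω * N x ω ∂μ) = 4 := by
    intro x; have := hNvar x; unfold cov at this; rw [hNexp x] at this; linarith
  have hPN : ∀ x, (∫ ω, P x ω * N x ω ∂μ) = 0 := by
    intro x; have := hPNcov x; unfold cov at this; rw [hPexp x, hNexp x] at this; linarith
  have hWW : ∀ a b, (∫ ω, W a ω * W b ω ∂μ) = if a = b then (4:ℝ) ^ n else 0 := by
    intro a b
    set Y : V → Ω → ℝ := fun x ω =>
      (if a x then P x ω else N x ω) * (if b x then P x ω else N x ω) with hY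
    have hYmeas : ∀ x, Measurable (Y x) := fun x => (hfmeas a x).mul (hfmeas b x)
    have hYbdd : ∀ x, ∃ C, ∀ ω, |Y x ω| ≤ C := by
      intro x
      obtain ⟨C1, hC1⟩ := hfbdd a x
      obtain ⟨C2, hC2⟩ := hfbdd b x
      exact ⟨|C1| * |C2|, fun ω => by
        rw [hY, abs_mul]
        exact mul_le_mul ((hC1 ω).trans (le_abs_self _)) ((hC2 ω).trans (le_abs_self _))
          (abs_nonneg _) (abs_nonneg _)⟩
    have hYind : iIndepFun Y μ := by
      have := hindep.comp (mγ := fun _ => inferInstance) (fun x (p : ℝ × ℝ) =>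
        (if a x then p.1 else p.2) * (if b x then p.1 else p.2))
        (fun x => by
          apply Measurable.mul <;>
            [skip; skip] <;> [by_cases h : a x; by_cases h : b x] <;>
            simp [h, measurable_fst, measurable_snd])
      convert this using 2
      rfl
    have hmul : (fun ω => W a ω * W b ω) = fun ω => ∏ x, Y x ω := by
      funext ω; rw [hW, hY]; simp [← Finset.prod_mul_distrib]
    have hYint : ∀ x, (∫ ω, Y x ω ∂μ) = if a x = b x then (4:ℝ) else 0 := by
      intro x
      rw [hY]
      by_cases ha : a x <;> by_cases hb : b x
      · simpa [ha, hb] using hsq x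
      · simpa [ha, hb] using hPN x
      · have hNP : (∫ ω, N x ω * P x ω ∂μ) = 0 := by
          simp_rw [mul_comm]; exact hPN x
        simpa [ha, hb] using hNP
      · simpa [ha, hb] using hsqN x
    rw [show (∫ ω, W a ω * W b ω ∂μ) = ∫ ω, ∏ x, Y x ω ∂μ from by rw [← hmul],
      integral_prod_of_iIndep Y hYmeas hYbdd hYind]
    by_cases hab : a = b
    · subst hab
      simp [hYint, Finset.prod_const, Finset.card_univ, n]
    · obtain ⟨x, hx⟩ := Function.ne_iff.mp hab
      rw [if_neg hab]
      exact Finset.prod_eq_zero (Finset.mem_univ x) (by rw [hYint x, if_neg hx])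
  -- integrability of products
  have hWWint : ∀ a b, Integrable (fun ω => W a ω * W b ω) μ := by
    intro a b
    refine integrable_of_bdd ((hWmeas a).mul (hWmeas b)) ?_
    obtain ⟨C1, hC1⟩ := hWbdd a
    obtain ⟨C2, hC2⟩ := hWbdd b
    exact ⟨|C1| * |C2|, fun ω => by
      rw [abs_mul]
      exact mul_le_mul ((hC1 ω).trans (le_abs_self _)) ((hC2 ω).trans (le_abs_self _))
        (abs_nonneg _) (abs_nonneg _)⟩
  -- expand the covariance
  unfold cov
  have e1 : (∫ ω, (∑ a ∈ Af, W a ω) * (∑ b ∈ Ag, W b ω) ∂μ)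
      = ∑ a ∈ Af, ∑ b ∈ Ag, (∫ ω, W a ω * W b ω ∂μ) := by
    have : (fun ω => (∑ a ∈ Af, W a ω) * (∑ b ∈ Ag, W b ω))
        = fun ω => ∑ a ∈ Af, ∑ b ∈ Ag, W a ω * W b ω := by
      funext ω; rw [Finset.sum_mul_sum]
    rw [this, integral_finset_sum _ (fun a _ => integrable_finset_sum _ (fun b _ => hWWint a b))]
    exact Finset.sum_congr rfl fun a _ => integral_finset_sum _ (fun b _ => hWWint a b)
  have e2 : (∫ ω, ∑ a ∈ Af, W a ω ∂μ) = (Af.card : ℝ) := by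
    rw [integral_finset_sum _ (fun a _ => hWint a)]
    simp [hWexp]
  have e3 : (∫ ω, ∑ b ∈ Ag, W b ω ∂μ) = (Ag.card : ℝ) := by
    rw [integral_finset_sum _ (fun b _ => hWint b)]
    simp [hWexp]
  rw [e1, e2, e3]
  have e4 : ∑ a ∈ Af, ∑ b ∈ Ag, (∫ ω, W a ω * W b ω ∂μ)
      = (4:ℝ) ^ n * ((Af ∩ Ag).card : ℝ) := by
    simp only [hWW]
    have h1 : ∀ a ∈ Af, (∑ b ∈ Ag, if a = b then (4:ℝ)^n else 0)
        = if a ∈ Ag then (4:ℝ)^n else 0 := fun a _ => Finset.sum_ite_eq Ag a _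
    rw [Finset.sum_congr rfl h1, Finset.sum_ite_mem, Finset.sum_const, nsmul_eq_mul, mul_comm]
  rw [e4]
  -- counting
  have hcount : ((Af ×ˢ Ag).filter (fun p => p.1 ≠ p.2)).card
      = Af.card * Ag.card - (Af ∩ Ag).card := by
    have hsplit : ((Af ×ˢ Ag).filter (fun p => p.1 = p.2)).card
        + ((Af ×ˢ Ag).filter (fun p => p.1 ≠ p.2)).card = Af.card * Ag.card := by
      rw [Finset.card_filter_add_card_filter_not, Finset.card_product]
    have hdiag : ((Af ×ˢ Ag).filter (fun p => p.1 = p.2)) = (Af ∩ Ag).image (fun a => (a, a)) := by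
      ext ⟨a, b⟩
      simp only [Finset.mem_filter, Finset.mem_product, Finset.mem_image, Finset.mem_inter]
      constructor
      · rintro ⟨⟨h1, h2⟩, rfl⟩; exact ⟨a, ⟨h1, h2⟩, rfl⟩
      · rintro ⟨c, ⟨h1, h2⟩, h3⟩
        injection h3 with h4 h5
        subst h4; subst h5
        exact ⟨⟨h1, h2⟩, rfl⟩
    have hdiagcard : ((Af ×ˢ Ag).filter (fun p => p.1 = p.2)).card = (Af ∩ Ag).card := by
      rw [hdiag, Finset.card_image_of_injective _ (fun x y h => (Prod.mk.inj h).1)]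
    omega
  have hle : (Af ∩ Ag).card ≤ Af.card * Ag.card := by
    rcases Ag.eq_empty_or_nonempty with h | h
    · simp [h]
    · exact le_trans (Finset.card_le_card Finset.inter_subset_left)
        (Nat.le_mul_of_pos_right _ (Finset.card_pos.mpr h))
  rw [hcount]
  push_cast [hle]
  ring
end

section
/- Let f, g be Boolean functions on a finite variable set V of size n, with weights as in the hard-instance setting (E[P_x]=E[N_x]=1, Var=3, Cov(P_x,N_x)=−1, cross-variable independence). Then (4^n − 1)·(|A_{f∧g}| − 1) < Cov(W_f, W_g) ≤ (4^n − 1)·|A_{f∧g}|, and consequently |A_{f∧g}| = ⌈Cov(W_f, W_g) / (4^n − 1)⌉. -/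
open MeasureTheory ProbabilityTheory

lemma aux_bdd_prod {Ω ι : Type*} (g : ι → Ω → ℝ) (hb : ∀ i, ∃ C, ∀ ω, |g i ω| ≤ C)
    (s : Finset ι) : ∃ C, ∀ ω, |∏ i ∈ s, g i ω| ≤ C := by
  refine ⟨∏ i ∈ s, |Classical.choose (hb i)|, fun ω => ?_⟩
  rw [Finset.abs_prod]
  exact Finset.prod_le_prod (fun i _ => abs_nonneg _)
    (fun i _ => (Classical.choose_spec (hb i) ω).trans (le_abs_self _))

lemma aux_integrable_of_bdd {Ω : Type*} [MeasurableSpace Ω] {μ : Measure Ω}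
    [IsFiniteMeasure μ] {g : Ω → ℝ} (hm : Measurable g) (h : ∃ C, ∀ ω, |g ω| ≤ C) :
    Integrable g μ := by
  obtain ⟨C, hC⟩ := h
  exact (integrable_const C).mono' hm.aestronglyMeasurable
    (Filter.Eventually.of_forall fun ω => by simpa [Real.norm_eq_abs] using hC ω)

lemma aux_integral_prod {Ω ι : Type*} [MeasurableSpace Ω] (μ : Measure Ω)
    [IsProbabilityMeasure μ] (g : ι → Ω → ℝ)
    (hind : iIndepFun g μ)
    (hm : ∀ i, Measurable (g i)) (hb : ∀ i, ∃ C, ∀ ω, |g i ω| ≤ C) (s : Finset ι) :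
    ∫ ω, ∏ i ∈ s, g i ω ∂μ = ∏ i ∈ s, ∫ ω, g i ω ∂μ := by
  classical
  induction s using Finset.induction_on with
  | empty => simp
  | @insert i s his ih =>
    have hIndep : IndepFun (g i) (∏ j ∈ s, g j) μ :=
      (hind.indepFun_finsetProd_of_notMem hm his).symm
    have hInt1 : Integrable (g i) μ := aux_integrable_of_bdd (hm i) (hb i)
    have hmp : Measurable (fun ω => ∏ j ∈ s, g j ω) :=
      Finset.measurable_prod s fun j _ => hm j
    have hfun : (∏ j ∈ s, g j) = fun ω => ∏ j ∈ s, g j ω := by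
      ext ω; simp [Finset.prod_apply]
    have hInt2 : Integrable (∏ j ∈ s, g j) μ := by
      rw [hfun]; exact aux_integrable_of_bdd (μ := μ) hmp (aux_bdd_prod g hb s)
    have key := hIndep.integral_mul_eq_mul_integral hInt1.aestronglyMeasurable hInt2.aestronglyMeasurable
    simp only [Finset.prod_insert his]
    rw [hfun] at key
    have h1 : (g i * fun ω => ∏ j ∈ s, g j ω) = fun ω => g i ω * ∏ j ∈ s, g j ω := rfl
    rw [h1] at key
    rw [key, ih]

set_option maxHeartbeats 2000000 in
theorem model_count_from_cov {Ω V : Type*} [MeasurableSpace Ω] [Fintype V] [DecidableEq V]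
    (μ : Measure Ω) [IsProbabilityMeasure μ] (P N : V → Ω → ℝ)
    (hPmeas : ∀ x, Measurable (P x)) (hNmeas : ∀ x, Measurable (N x))
    (hPbdd : ∀ x, ∃ C, ∀ ω, |P x ω| ≤ C) (hNbdd : ∀ x, ∃ C, ∀ ω, |N x ω| ≤ C)
    (hPexp : ∀ x, (∫ ω, P x ω ∂μ) = 1) (hNexp : ∀ x, (∫ ω, N x ω ∂μ) = 1)
    (hPvar : ∀ x, cov μ (P x) (P x) = 3) (hNvar : ∀ x, cov μ (N x) (N x) = 3)
    (hPNcov : ∀ x, cov μ (P x) (N x) = -1)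
    (hindep : iIndepFun (fun x ω => (P x ω, N x ω)) μ)
    (hn : 1 ≤ Fintype.card V) (Af Ag : Finset (V → Bool)) :
    ((4 : ℝ) ^ (Fintype.card V) - 1) * (((Af ∩ Ag).card : ℝ) - 1) <
        cov μ (fun ω => ∑ a ∈ Af, ∏ x, (if a x then P x ω else N x ω))
              (fun ω => ∑ b ∈ Ag, ∏ x, (if b x then P x ω else N x ω)) ∧
      cov μ (fun ω => ∑ a ∈ Af, ∏ x, (if a x then P x ω else N x ω))
            (fun ω => ∑ b ∈ Ag, ∏ x, (if b x then P x ω else N x ω)) ≤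
        ((4 : ℝ) ^ (Fintype.card V) - 1) * ((Af ∩ Ag).card : ℝ) ∧
      ((Af ∩ Ag).card : ℤ) =
        ⌈cov μ (fun ω => ∑ a ∈ Af, ∏ x, (if a x then P x ω else N x ω))
               (fun ω => ∑ b ∈ Ag, ∏ x, (if b x then P x ω else N x ω)) /
          ((4 : ℝ) ^ (Fintype.card V) - 1)⌉ := by
  classical
  set n := Fintype.card V with hn_def
  set W : (V → Bool) → Ω → ℝ := fun a ω => ∏ x, (if a x then P x ω else N x ω) with hWdef
  clear_value n
  -- basic facts about factors
  have hfm : ∀ (a : V → Bool) (x : V), Measurable (fun ω => if a x then P x ω else N x ω) := by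
    intro a x; cases h : a x <;> simp [h, hPmeas x, hNmeas x]
  have hfb : ∀ (a : V → Bool) (x : V), ∃ C, ∀ ω, |if a x then P x ω else N x ω| ≤ C := by
    intro a x; cases h : a x <;> simp [h]
    exacts [hNbdd x, hPbdd x]
  have hE1 : ∀ (a : V → Bool) (x : V), (∫ ω, (if a x then P x ω else N x ω) ∂μ) = 1 := by
    intro a x; cases h : a x <;> simp [h, hPexp x, hNexp x]
  -- independence of the composed families
  have hindA : ∀ a : V → Bool,
      iIndepFun (fun x ω => if a x then P x ω else N x ω) μ := by
    intro a
    exact hindep.comp (g := fun x (p : ℝ × ℝ) => if a x then p.1 else p.2)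
      (fun x => by
        by_cases ha : a x = true <;> simp [ha] <;> fun_prop)
  have hindAB : ∀ a b : V → Bool,
      iIndepFun
        (fun x ω => (if a x then P x ω else N x ω) * (if b x then P x ω else N x ω)) μ := by
    intro a b
    exact hindep.comp
      (g := fun x (p : ℝ × ℝ) => (if a x then p.1 else p.2) * (if b x then p.1 else p.2))
      (fun x => by
        by_cases ha : a x = true <;> by_cases hb : b x = true <;>
          simp [ha, hb] <;> fun_prop)
  -- second moments
  have hPP : ∀ x, (∫ ω, P x ω * P x ω ∂μ) = 4 := by
    intro x; have h := hPvar x; simp only [cov, hPexp x, mul_one] at h; linarith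
  have hNN : ∀ x, (∫ ω, N x ω * N x ω ∂μ) = 4 := by
    intro x; have h := hNvar x; simp only [cov, hNexp x, mul_one] at h; linarith
  have hPN : ∀ x, (∫ ω, P x ω * N x ω ∂μ) = 0 := by
    intro x; have h := hPNcov x; simp only [cov, hPexp x, hNexp x, mul_one] at h; linarith
  have hNP : ∀ x, (∫ ω, N x ω * P x ω ∂μ) = 0 := by
    intro x; rw [← hPN x]; congr 1; ext ω; ring
  have hE2 : ∀ (a b : V → Bool) (x : V),
      (∫ ω, (if a x then P x ω else N x ω) * (if b x then P x ω else N x ω) ∂μ)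
        = if a x = b x then 4 else 0 := by
    intro a b x
    cases ha : a x <;> cases hb : b x <;> simp [ha, hb, hPP x, hNN x, hPN x, hNP x]
  -- measurability, bounds, integrability, expectation of W a
  have hmW : ∀ a, Measurable (W a) := fun a =>
    Finset.measurable_prod Finset.univ fun x _ => hfm a x
  have hbW : ∀ a, ∃ C, ∀ ω, |W a ω| ≤ C := fun a =>
    aux_bdd_prod (fun x ω => if a x then P x ω else N x ω) (hfb a) Finset.univ
  have hIntW : ∀ a, Integrable (W a) μ := fun a => aux_integrable_of_bdd (hmW a) (hbW a)
  have hEW : ∀ a, (∫ ω, W a ω ∂μ) = 1 := by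
    intro a
    have := aux_integral_prod μ _ (hindA a) (hfm a) (hfb a) Finset.univ
    simpa [hE1 a] using this
  -- expectation of products W a * W b
  have hEWW : ∀ a b, (∫ ω, W a ω * W b ω ∂μ) = if a = b then (4 : ℝ) ^ n else 0 := by
    intro a b
    have hprod : ∀ ω, W a ω * W b ω
        = ∏ x, (if a x then P x ω else N x ω) * (if b x then P x ω else N x ω) := by
      intro ω; rw [hWdef]; exact Finset.prod_mul_distrib.symm
    have hmx : ∀ x : V, Measurable
        (fun ω => (if a x then P x ω else N x ω) * (if b x then P x ω else N x ω)) :=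
      fun x => (hfm a x).mul (hfm b x)
    have hbx : ∀ x : V, ∃ C, ∀ ω,
        |(if a x then P x ω else N x ω) * (if b x then P x ω else N x ω)| ≤ C := by
      intro x
      obtain ⟨C, hC⟩ := hfb a x
      obtain ⟨D, hD⟩ := hfb b x
      refine ⟨max C 0 * max D 0, fun ω => ?_⟩
      rw [abs_mul]
      exact mul_le_mul ((hC ω).trans (le_max_left _ _)) ((hD ω).trans (le_max_left _ _))
        (abs_nonneg _) (le_max_right _ _)
    have hint := aux_integral_prod μ _ (hindAB a b) hmx hbx Finset.univ
    have : (∫ ω, W a ω * W b ω ∂μ)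
        = ∏ x, (∫ ω, (if a x then P x ω else N x ω) * (if b x then P x ω else N x ω) ∂μ) := by
      rw [← hint]; exact integral_congr_ae (Filter.Eventually.of_forall fun ω => hprod ω)
    rw [this]
    by_cases hab : a = b
    · subst hab
      rw [Finset.prod_congr rfl fun x _ => hE2 a a x]
      simp [hn_def]
    · have : ∃ x, a x ≠ b x := by
        by_contra h
        push_neg at h
        exact hab (funext h)
      obtain ⟨x, hx⟩ := this
      rw [if_neg hab]
      exact Finset.prod_eq_zero (Finset.mem_univ x) (by rw [hE2 a b x, if_neg hx])
  -- integrability of W a * W b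
  have hIntWW : ∀ a b, Integrable (fun ω => W a ω * W b ω) μ := by
    intro a b
    apply aux_integrable_of_bdd ((hmW a).mul (hmW b))
    obtain ⟨C, hC⟩ := hbW a
    obtain ⟨D, hD⟩ := hbW b
    refine ⟨max C 0 * max D 0, fun ω => ?_⟩
    rw [Pi.mul_apply, abs_mul]
    exact mul_le_mul ((hC ω).trans (le_max_left _ _)) ((hD ω).trans (le_max_left _ _))
      (abs_nonneg _) (le_max_right _ _)
  -- expectation of the sums
  have hEWf : ∀ s : Finset (V → Bool), (∫ ω, ∑ a ∈ s, W a ω ∂μ) = (s.card : ℝ) := by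
    intro s
    rw [integral_finset_sum _ fun a _ => hIntW a]
    simp [hEW]
  -- expectation of the product of sums
  have hEprod : (∫ ω, (∑ a ∈ Af, W a ω) * (∑ b ∈ Ag, W b ω) ∂μ)
      = (4 : ℝ) ^ n * ((Af ∩ Ag).card : ℝ) := by
    have h1 : ∀ ω, (∑ a ∈ Af, W a ω) * (∑ b ∈ Ag, W b ω)
        = ∑ a ∈ Af, ∑ b ∈ Ag, W a ω * W b ω := by
      intro ω; rw [Finset.sum_mul_sum]
    calc (∫ ω, (∑ a ∈ Af, W a ω) * (∑ b ∈ Ag, W b ω) ∂μ)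
        = ∫ ω, ∑ a ∈ Af, ∑ b ∈ Ag, W a ω * W b ω ∂μ :=
          integral_congr_ae (Filter.Eventually.of_forall h1)
      _ = ∑ a ∈ Af, ∑ b ∈ Ag, ∫ ω, W a ω * W b ω ∂μ := by
          rw [integral_finset_sum _ fun a _ => integrable_finset_sum _ fun b _ => hIntWW a b]
          exact Finset.sum_congr rfl fun a _ =>
            integral_finset_sum _ fun b _ => hIntWW a b
      _ = ∑ a ∈ Af, if a ∈ Ag then (4 : ℝ) ^ n else 0 := by
          refine Finset.sum_congr rfl fun a _ => ?_
          rw [Finset.sum_congr rfl fun b _ => hEWW a b, Finset.sum_ite_eq Ag a fun _ => (4:ℝ)^n]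
      _ = (4 : ℝ) ^ n * ((Af ∩ Ag).card : ℝ) := by
          rw [Finset.sum_ite_mem, Finset.sum_const, nsmul_eq_mul, mul_comm]
  -- covariance value
  have hcov : cov μ (fun ω => ∑ a ∈ Af, ∏ x, (if a x then P x ω else N x ω))
      (fun ω => ∑ b ∈ Ag, ∏ x, (if b x then P x ω else N x ω))
      = (4 : ℝ) ^ n * ((Af ∩ Ag).card : ℝ) - (Af.card : ℝ) * (Ag.card : ℝ) := by
    unfold cov
    rw [show (fun ω => ∑ a ∈ Af, ∏ x, (if a x then P x ω else N x ω))
        = fun ω => ∑ a ∈ Af, W a ω from rfl,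
      show (fun ω => ∑ b ∈ Ag, ∏ x, (if b x then P x ω else N x ω))
        = fun ω => ∑ b ∈ Ag, W b ω from rfl]
    rw [hEprod, hEWf Af, hEWf Ag]
  -- arithmetic
  have hcardfun : Fintype.card (V → Bool) = 2 ^ n := by
    rw [Fintype.card_fun, Fintype.card_bool, hn_def]
  have hT2 : (2 : ℝ) ≤ (2 : ℝ) ^ n := by
    calc (2 : ℝ) = 2 ^ 1 := (pow_one 2).symm
    _ ≤ 2 ^ n := pow_le_pow_right₀ one_le_two hn
  have hDT : (4 : ℝ) ^ n = (2 : ℝ) ^ n * (2 : ℝ) ^ n := by rw [← mul_pow]; norm_num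
  have hcast : ∀ s : Finset (V → Bool), (s.card : ℝ) ≤ (2 : ℝ) ^ n := by
    intro s
    have h := Finset.card_le_univ s
    rw [hcardfun] at h
    calc (s.card : ℝ) ≤ ((2 ^ n : ℕ) : ℝ) := by exact_mod_cast h
    _ = (2 : ℝ) ^ n := by push_cast; ring
  have hKM : (((Af ∩ Ag).card : ℝ)) ≤ (Af.card : ℝ) :=
    Nat.cast_le.2 (Finset.card_le_card Finset.inter_subset_left)
  have hKL : (((Af ∩ Ag).card : ℝ)) ≤ (Ag.card : ℝ) :=
    Nat.cast_le.2 (Finset.card_le_card Finset.inter_subset_right)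
  have hK0 : (0 : ℝ) ≤ ((Af ∩ Ag).card : ℝ) := Nat.cast_nonneg _
  have hKMLnat : (Af ∩ Ag).card ≤ Af.card * Ag.card := by
    rcases Nat.eq_zero_or_pos (Af ∩ Ag).card with h | h
    · omega
    · have h1 : 1 ≤ Ag.card := le_trans h (Finset.card_le_card Finset.inter_subset_right)
      calc (Af ∩ Ag).card ≤ Af.card := Finset.card_le_card Finset.inter_subset_left
      _ ≤ Af.card * Ag.card := Nat.le_mul_of_pos_right _ h1
  have hKML : (((Af ∩ Ag).card : ℝ)) ≤ (Af.card : ℝ) * (Ag.card : ℝ) := by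
    exact_mod_cast hKMLnat
  have hKU : (((Af ∩ Ag).card : ℝ)) + ((Af ∪ Ag).card : ℝ)
      = (Af.card : ℝ) + (Ag.card : ℝ) := by
    exact_mod_cast Finset.card_inter_add_card_union Af Ag
  have hkeygen : ∀ K M L U T : ℝ, 0 ≤ K → K ≤ M → K ≤ L → M ≤ T → L ≤ T → U ≤ T →
      K + U = M + L → 2 ≤ T → (M = 0 ∨ 1 ≤ M) → (L = 0 ∨ 1 ≤ L) →
      M * L - K < T * T - 1 := by
    rintro K M L U T h0 h1 h2 h3 h4 h5 h6 h7 (hM | hM) (hL | hL)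
    · subst hM; nlinarith
    · subst hM; nlinarith
    · subst hL; nlinarith
    · have hml : (M - 1) * (L - 1) ≤ (T - 1) * (T - 1) :=
        mul_le_mul (by linarith) (by linarith) (by linarith) (by linarith)
      nlinarith
  have hMalt : ((Af.card : ℝ) = 0 ∨ 1 ≤ (Af.card : ℝ)) := by
    rcases Nat.eq_zero_or_pos Af.card with h | h
    · left; exact_mod_cast h
    · right; exact_mod_cast h
  have hLalt : ((Ag.card : ℝ) = 0 ∨ 1 ≤ (Ag.card : ℝ)) := by
    rcases Nat.eq_zero_or_pos Ag.card with h | h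
    · left; exact_mod_cast h
    · right; exact_mod_cast h
  have hkey : (Af.card : ℝ) * (Ag.card : ℝ) - ((Af ∩ Ag).card : ℝ)
      < (2 : ℝ) ^ n * (2 : ℝ) ^ n - 1 :=
    hkeygen _ _ _ _ _ hK0 hKM hKL (hcast Af) (hcast Ag) (hcast (Af ∪ Ag)) hKU hT2 hMalt hLalt
  have hlow : ((4 : ℝ) ^ n - 1) * (((Af ∩ Ag).card : ℝ) - 1) <
      (4 : ℝ) ^ n * ((Af ∩ Ag).card : ℝ) - (Af.card : ℝ) * (Ag.card : ℝ) := by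
    rw [hDT]; nlinarith [hkey]
  have hhigh : (4 : ℝ) ^ n * ((Af ∩ Ag).card : ℝ) - (Af.card : ℝ) * (Ag.card : ℝ) ≤
      ((4 : ℝ) ^ n - 1) * ((Af ∩ Ag).card : ℝ) := by
    nlinarith [hKML]
  have hDpos : (0 : ℝ) < (4 : ℝ) ^ n - 1 := by
    rw [hDT]; nlinarith [hT2]
  refine ⟨by rw [hcov]; exact hlow, by rw [hcov]; exact hhigh, ?_⟩
  rw [hcov]
  symm
  rw [Int.ceil_eq_iff]
  constructor
  · rw [lt_div_iff₀ hDpos]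
    push_cast
    nlinarith [hlow]
  · rw [div_le_iff₀ hDpos]
    push_cast
    nlinarith [hhigh]
end

section
/- Let V be partitioned as V = V^l ⊔ V^r. Suppose f = f^l ∧ f^r and g = g^l ∧ g^r where f^l, g^l are Boolean functions on V^l and f^r, g^r are Boolean functions on V^r. Then Cov(W_f^V, W_g^V) = Cov(W_{f^l}^{V^l}, W_{g^l}^{V^l})·Cov(W_{f^r}^{V^r}, W_{g^r}^{V^r}) + Cov(W_{f^l}^{V^l}, W_{g^l}^{V^l})·E[W_{f^r}^{V^r}]·E[W_{g^r}^{V^r}] + E[W_{f^l}^{V^l}]·E[W_{g^l}^{V^l}]·Cov(W_{f^r}^{V^r}, W_{g^r}^{V^r}). -/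
open MeasureTheory ProbabilityTheory

/-- Weighted model count over variable set `U` with model set `A`. -/
noncomputable def wmc {Ω U : Type*} [Fintype U] (P N : U → Ω → ℝ)
    (A : Finset (U → Bool)) : Ω → ℝ :=
  fun ω => ∑ a ∈ A, ∏ x, if a x then P x ω else N x ω

lemma wmc_factor {Ω Vl Vr : Type*} [Fintype Vl] [DecidableEq Vl] [Fintype Vr] [DecidableEq Vr]
    (P N : Vl ⊕ Vr → Ω → ℝ) (Afl : Finset (Vl → Bool)) (Afr : Finset (Vr → Bool)) (ω : Ω) :
    wmc P N (Finset.univ.filter (fun a : (Vl ⊕ Vr) → Bool =>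
      (fun x => a (Sum.inl x)) ∈ Afl ∧ (fun x => a (Sum.inr x)) ∈ Afr)) ω =
    wmc (fun x => P (Sum.inl x)) (fun x => N (Sum.inl x)) Afl ω *
    wmc (fun x => P (Sum.inr x)) (fun x => N (Sum.inr x)) Afr ω := by
  classical
  unfold wmc
  rw [Finset.sum_mul_sum, ← Finset.sum_product']
  refine Finset.sum_nbij' (fun a => (fun x => a (Sum.inl x), fun x => a (Sum.inr x)))
    (fun p => Sum.elim p.1 p.2) ?_ ?_ ?_ ?_ ?_
  · intro a ha
    simp only [Finset.mem_filter, Finset.mem_univ, true_and] at ha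
    simpa [Finset.mem_product] using ha
  · intro p hp
    simp only [Finset.mem_product] at hp
    simp [hp.1, hp.2]
  · intro a _
    funext x
    cases x <;> rfl
  · intro p _
    rfl
  · intro a _
    rw [Fintype.prod_sum_type]

lemma wmc_meas {Ω U : Type*} [MeasurableSpace Ω] [Fintype U] (P N : U → Ω → ℝ)
    (hP : ∀ x, Measurable (P x)) (hN : ∀ x, Measurable (N x)) (A : Finset (U → Bool)) :
    Measurable (wmc P N A) := by
  unfold wmc
  refine Finset.measurable_sum _ fun a _ => Finset.measurable_prod _ fun x _ => ?_
  cases h : a x <;> simp only [h, if_true, if_false, Bool.false_eq_true]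
  · exact hN x
  · exact hP x

/-- Structured conjunction decomposition: `V = Vl ⊔ Vr` is modeled as the sum type `Vl ⊕ Vr`;
`f = fˡ ∧ fʳ` and `g = gˡ ∧ gʳ` with `fˡ, gˡ` on `Vl` (model sets `Afl, Agl`)
and `fʳ, gʳ` on `Vr` (model sets `Afr, Agr`). -/
theorem cov_structured_and {Ω Vl Vr : Type*} [MeasurableSpace Ω]
    [Fintype Vl] [DecidableEq Vl] [Fintype Vr] [DecidableEq Vr]
    (μ : Measure Ω) [IsProbabilityMeasure μ] (P N : Vl ⊕ Vr → Ω → ℝ)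
    (hPmeas : ∀ x, Measurable (P x)) (hNmeas : ∀ x, Measurable (N x))
    (hPbdd : ∀ x, ∃ C, ∀ ω, |P x ω| ≤ C) (hNbdd : ∀ x, ∃ C, ∀ ω, |N x ω| ≤ C)
    (hindep : iIndepFun (fun x ω => (P x ω, N x ω)) μ)
    (Afl Agl : Finset (Vl → Bool)) (Afr Agr : Finset (Vr → Bool))
    (Af Ag : Finset ((Vl ⊕ Vr) → Bool))
    (hAf : Af = Finset.univ.filter (fun a : (Vl ⊕ Vr) → Bool =>
      (fun x => a (Sum.inl x)) ∈ Afl ∧ (fun x => a (Sum.inr x)) ∈ Afr))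
    (hAg : Ag = Finset.univ.filter (fun a : (Vl ⊕ Vr) → Bool =>
      (fun x => a (Sum.inl x)) ∈ Agl ∧ (fun x => a (Sum.inr x)) ∈ Agr)) :
    cov μ (wmc P N Af) (wmc P N Ag) =
      cov μ (wmc (fun x => P (Sum.inl x)) (fun x => N (Sum.inl x)) Afl)
            (wmc (fun x => P (Sum.inl x)) (fun x => N (Sum.inl x)) Agl) *
        cov μ (wmc (fun x => P (Sum.inr x)) (fun x => N (Sum.inr x)) Afr)
              (wmc (fun x => P (Sum.inr x)) (fun x => N (Sum.inr x)) Agr) +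
      cov μ (wmc (fun x => P (Sum.inl x)) (fun x => N (Sum.inl x)) Afl)
            (wmc (fun x => P (Sum.inl x)) (fun x => N (Sum.inl x)) Agl) *
        (∫ ω, wmc (fun x => P (Sum.inr x)) (fun x => N (Sum.inr x)) Afr ω ∂μ) *
        (∫ ω, wmc (fun x => P (Sum.inr x)) (fun x => N (Sum.inr x)) Agr ω ∂μ) +
      (∫ ω, wmc (fun x => P (Sum.inl x)) (fun x => N (Sum.inl x)) Afl ω ∂μ) *
        (∫ ω, wmc (fun x => P (Sum.inl x)) (fun x => N (Sum.inl x)) Agl ω ∂μ) *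
        cov μ (wmc (fun x => P (Sum.inr x)) (fun x => N (Sum.inr x)) Afr)
              (wmc (fun x => P (Sum.inr x)) (fun x => N (Sum.inr x)) Agr) := by
  classical
  set f : Vl ⊕ Vr → Ω → ℝ × ℝ := fun x ω => (P x ω, N x ω) with hfdef
  have hfmeas : ∀ x, Measurable (f x) := fun x => (hPmeas x).prodMk (hNmeas x)
  set S : Finset (Vl ⊕ Vr) := Finset.univ.image Sum.inl with hS
  set T : Finset (Vl ⊕ Vr) := Finset.univ.image Sum.inr with hT
  have hST : Disjoint S T := by
    rw [Finset.disjoint_left]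
    rintro a ha hb
    simp only [hS, hT, Finset.mem_image, Finset.mem_univ, true_and] at ha hb
    obtain ⟨x, rfl⟩ := ha
    obtain ⟨y, h⟩ := hb
    cases h
  have hind := hindep.indepFun_finset S T hST hfmeas
  have hxS : ∀ x : Vl, Sum.inl x ∈ S := fun x => Finset.mem_image_of_mem _ (Finset.mem_univ x)
  have hxT : ∀ x : Vr, Sum.inr x ∈ T := fun x => Finset.mem_image_of_mem _ (Finset.mem_univ x)
  -- left/right reading functions
  set φ : Finset (Vl → Bool) → ({ i // i ∈ S } → ℝ × ℝ) → ℝ :=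
    fun A v => ∑ a ∈ A, ∏ x, if a x then (v ⟨Sum.inl x, hxS x⟩).1 else (v ⟨Sum.inl x, hxS x⟩).2
    with hφ
  set ψ : Finset (Vr → Bool) → ({ i // i ∈ T } → ℝ × ℝ) → ℝ :=
    fun A v => ∑ a ∈ A, ∏ x, if a x then (v ⟨Sum.inr x, hxT x⟩).1 else (v ⟨Sum.inr x, hxT x⟩).2
    with hψ
  have hφmeas : ∀ A, Measurable (φ A) := by
    intro A
    refine Finset.measurable_sum _ fun a _ => Finset.measurable_prod _ fun x _ => ?_
    cases h : a x <;> simp only [h, if_true, if_false, Bool.false_eq_true]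
    · exact (measurable_pi_apply _).snd
    · exact (measurable_pi_apply _).fst
  have hψmeas : ∀ A, Measurable (ψ A) := by
    intro A
    refine Finset.measurable_sum _ fun a _ => Finset.measurable_prod _ fun x _ => ?_
    cases h : a x <;> simp only [h, if_true, if_false, Bool.false_eq_true]
    · exact (measurable_pi_apply _).snd
    · exact (measurable_pi_apply _).fst
  have hφcomp : ∀ A, wmc (fun x => P (Sum.inl x)) (fun x => N (Sum.inl x)) A =
      (φ A) ∘ (fun ω (i : { i // i ∈ S }) => f i ω) := by
    intro A; rfl
  have hψcomp : ∀ A, wmc (fun x => P (Sum.inr x)) (fun x => N (Sum.inr x)) A =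
      (ψ A) ∘ (fun ω (i : { i // i ∈ T }) => f i ω) := by
    intro A; rfl
  set Xl := wmc (fun x => P (Sum.inl x)) (fun x => N (Sum.inl x)) Afl
  set Yl := wmc (fun x => P (Sum.inl x)) (fun x => N (Sum.inl x)) Agl
  set Xr := wmc (fun x => P (Sum.inr x)) (fun x => N (Sum.inr x)) Afr
  set Yr := wmc (fun x => P (Sum.inr x)) (fun x => N (Sum.inr x)) Agr
  have hXlm : Measurable Xl := wmc_meas _ _ (fun x => hPmeas _) (fun x => hNmeas _) _
  have hYlm : Measurable Yl := wmc_meas _ _ (fun x => hPmeas _) (fun x => hNmeas _) _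
  have hXrm : Measurable Xr := wmc_meas _ _ (fun x => hPmeas _) (fun x => hNmeas _) _
  have hYrm : Measurable Yr := wmc_meas _ _ (fun x => hPmeas _) (fun x => hNmeas _) _
  -- independence of compositions
  have hindg : ∀ (gl : ({ i // i ∈ S } → ℝ × ℝ) → ℝ) (gr : ({ i // i ∈ T } → ℝ × ℝ) → ℝ),
      Measurable gl → Measurable gr →
      IndepFun (gl ∘ fun ω (i : { i // i ∈ S }) => f i ω)
        (gr ∘ fun ω (i : { i // i ∈ T }) => f i ω) μ :=
    fun gl gr hgl hgr => hind.comp hgl hgr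
  have hI1 : IndepFun Xl Xr μ := by
    rw [show Xl = _ from hφcomp Afl, show Xr = _ from hψcomp Afr]
    exact hindg _ _ (hφmeas _) (hψmeas _)
  have hI2 : IndepFun Yl Yr μ := by
    rw [show Yl = _ from hφcomp Agl, show Yr = _ from hψcomp Agr]
    exact hindg _ _ (hφmeas _) (hψmeas _)
  have hI3 : IndepFun (fun ω => Xl ω * Yl ω) (fun ω => Xr ω * Yr ω) μ := by
    have : (fun ω => Xl ω * Yl ω) = (fun v => φ Afl v * φ Agl v) ∘
        (fun ω (i : { i // i ∈ S }) => f i ω) := by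
      rw [show Xl = _ from hφcomp Afl, show Yl = _ from hφcomp Agl]; rfl
    rw [this]
    have : (fun ω => Xr ω * Yr ω) = (fun v => ψ Afr v * ψ Agr v) ∘
        (fun ω (i : { i // i ∈ T }) => f i ω) := by
      rw [show Xr = _ from hψcomp Afr, show Yr = _ from hψcomp Agr]; rfl
    rw [this]
    exact hindg _ _ ((hφmeas _).mul (hφmeas _)) ((hψmeas _).mul (hψmeas _))
  -- integrals
  have mulint : ∀ (X Y : Ω → ℝ), IndepFun X Y μ → Measurable X → Measurable Y →
      (∫ ω, X ω * Y ω ∂μ) = (∫ ω, X ω ∂μ) * (∫ ω, Y ω ∂μ) := by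
    intro X Y hXY hX hY
    have := hXY.integral_mul_eq_mul_integral hX.aestronglyMeasurable hY.aestronglyMeasurable
    simpa [Pi.mul_apply] using this
  have E1 : (∫ ω, (Xl ω * Xr ω) * (Yl ω * Yr ω) ∂μ)
      = (∫ ω, Xl ω * Yl ω ∂μ) * (∫ ω, Xr ω * Yr ω ∂μ) := by
    have h : (fun ω => (Xl ω * Xr ω) * (Yl ω * Yr ω))
        = fun ω => (Xl ω * Yl ω) * (Xr ω * Yr ω) := by funext ω; ring
    rw [show (∫ ω, (Xl ω * Xr ω) * (Yl ω * Yr ω) ∂μ)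
        = ∫ ω, (Xl ω * Yl ω) * (Xr ω * Yr ω) ∂μ by rw [integral_congr_ae (Filter.EventuallyEq.of_eq h)]]
    exact mulint _ _ hI3 (hXlm.mul hYlm) (hXrm.mul hYrm)
  have E2 : (∫ ω, Xl ω * Xr ω ∂μ) = (∫ ω, Xl ω ∂μ) * (∫ ω, Xr ω ∂μ) :=
    mulint _ _ hI1 hXlm hXrm
  have E3 : (∫ ω, Yl ω * Yr ω ∂μ) = (∫ ω, Yl ω ∂μ) * (∫ ω, Yr ω ∂μ) :=
    mulint _ _ hI2 hYlm hYrm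
  have hXfac : wmc P N Af = fun ω => Xl ω * Xr ω := by
    funext ω; rw [hAf]; exact wmc_factor P N Afl Afr ω
  have hYfac : wmc P N Ag = fun ω => Yl ω * Yr ω := by
    funext ω; rw [hAg]; exact wmc_factor P N Agl Agr ω
  rw [hXfac, hYfac]
  unfold cov
  simp only []
  rw [E1, E2, E3]
  ring
end
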